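/- Let G be a topological group and K a subgroup. For every n ≥ 1 the bijection ρₙ : ((K\G)ⁿ)/G → ((K\G)^{n-1})/K induced by (Kg₁, …, Kgₙ) ↦ (Kg₁gₙ^{-1}, …, Kg_{n-1}gₙ^{-1}) is a homeomorphism, where K\G carries the quotient topology from G, cartesian products carry the product topology, and the orbit sets ((K\G)ⁿ)/G and ((K\G)^{n-1})/K carry the quotient topologies. -/

import Mathlib

variable {G : Type*} [Group G]

/-- The space `K\G` of right cosets `Kg`. -/
abbrev RCoset (G : Type*) [Group G] (K : Subgroup G) : Type _ :=
  Quotient (QuotientGroup.rightRel K)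

/-- The right coset `Kg` of `g`. -/
def rc (K : Subgroup G) (g : G) : RCoset G K :=
  Quotient.mk (QuotientGroup.rightRel K) g

/-- The right action of `G` on `K\G`: `(Kg)·h = K(gh)`. -/
def rcSMul (K : Subgroup G) (x : RCoset G K) (g : G) : RCoset G K :=
  Quotient.map' (· * g)
    (fun a b h => by
      rw [QuotientGroup.rightRel_apply] at h ⊢
      have : b * g * (a * g)⁻¹ = b * a⁻¹ := by group
      rw [this]; exact h) x

theorem rcSMul_mk (K : Subgroup G) (g h : G) : rcSMul K (rc K g) h = rc K (g * h) := rfl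

theorem rcSMul_one (K : Subgroup G) (x : RCoset G K) : rcSMul K x 1 = x := by
  induction x using Quotient.ind with
  | _ a => show rc K (a * 1) = rc K a; rw [mul_one]

theorem rcSMul_mul (K : Subgroup G) (x : RCoset G K) (g h : G) :
    rcSMul K (rcSMul K x g) h = rcSMul K x (g * h) := by
  induction x using Quotient.ind with
  | _ a => show rc K (a * g * h) = rc K (a * (g * h)); rw [mul_assoc]

/-- The orbit equivalence relation on `(K\G)ⁿ` for the diagonal right `G`-action. -/
def orbRelG (K : Subgroup G) (n : ℕ) : Setoid (Fin n → RCoset G K) where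
  r x y := ∃ g : G, ∀ i, rcSMul K (x i) g = y i
  iseqv := by
    refine ⟨fun x => ⟨1, fun i => rcSMul_one K (x i)⟩, ?_, ?_⟩
    · rintro x y ⟨g, hg⟩
      exact ⟨g⁻¹, fun i => by
        rw [← hg i, rcSMul_mul, mul_inv_cancel, rcSMul_one]⟩
    · rintro x y z ⟨g, hg⟩ ⟨h, hh⟩
      exact ⟨g * h, fun i => by rw [← rcSMul_mul, hg i, hh i]⟩

/-- The orbit equivalence relation on `(K\G)ⁿ` for the diagonal right `K`-action. -/
def orbRelK (K : Subgroup G) (n : ℕ) : Setoid (Fin n → RCoset G K) where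
  r x y := ∃ g : K, ∀ i, rcSMul K (x i) (g : G) = y i
  iseqv := by
    refine ⟨fun x => ⟨1, fun i => rcSMul_one K (x i)⟩, ?_, ?_⟩
    · rintro x y ⟨g, hg⟩
      exact ⟨g⁻¹, fun i => by
        rw [← hg i, rcSMul_mul]
        show rcSMul K (x i) ((g : G) * (g : G)⁻¹) = x i
        rw [mul_inv_cancel, rcSMul_one]⟩
    · rintro x y z ⟨g, hg⟩ ⟨h, hh⟩
      exact ⟨g * h, fun i => by
        show rcSMul K (x i) ((g : G) * (h : G)) = z i
        rw [← rcSMul_mul, hg i, hh i]⟩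


section Aux

open Topology

variable {G : Type*} [Group G]

theorem rc_eq_iff (K : Subgroup G) {a b : G} : rc K a = rc K b ↔ b * a⁻¹ ∈ K := by
  constructor
  · intro h
    exact QuotientGroup.rightRel_apply.mp (Quotient.exact h)
  · intro h
    exact Quotient.sound (QuotientGroup.rightRel_apply.mpr h)

theorem rc_out (K : Subgroup G) (x : RCoset G K) : rc K x.out = x := Quotient.out_eq x

/-- The forward map on representatives. -/
def Fmk (K : Subgroup G) (n : ℕ) (g : Fin (n + 1) → G) : Quotient (orbRelK K n) :=
  Quotient.mk (orbRelK K n) (fun i : Fin n => rc K (g i.castSucc * (g (Fin.last n))⁻¹))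

/-- The inverse map on representatives. -/
def Gmk (K : Subgroup G) (n : ℕ) (g : Fin n → G) : Quotient (orbRelG K (n + 1)) :=
  Quotient.mk (orbRelG K (n + 1)) (Fin.snoc (fun i : Fin n => rc K (g i)) (rc K 1))

/-- Well-definedness of the forward map. -/
theorem Fkey (K : Subgroup G) (n : ℕ) (g g' : Fin (n + 1) → G)
    (hyp : ∃ h : G, ∀ i, rc K (g i * h) = rc K (g' i)) :
    Fmk K n g = Fmk K n g' := by
  obtain ⟨h, hh⟩ := hyp
  have hmem : ∀ i, g' i * (g i * h)⁻¹ ∈ K := fun i => (rc_eq_iff K).mp (hh i)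
  have hk : (g (Fin.last n) * h) * (g' (Fin.last n))⁻¹ ∈ K := by
    have := K.inv_mem (hmem (Fin.last n))
    simpa using this
  apply Quotient.sound
  refine ⟨⟨(g (Fin.last n) * h) * (g' (Fin.last n))⁻¹, hk⟩, fun i => ?_⟩
  show rcSMul K (rc K (g i.castSucc * (g (Fin.last n))⁻¹))
      ((g (Fin.last n) * h) * (g' (Fin.last n))⁻¹) = rc K (g' i.castSucc * (g' (Fin.last n))⁻¹)
  rw [rcSMul_mk, rc_eq_iff]
  have : g' i.castSucc * (g' (Fin.last n))⁻¹ *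
      (g i.castSucc * (g (Fin.last n))⁻¹ * (g (Fin.last n) * h * (g' (Fin.last n))⁻¹))⁻¹ =
      g' i.castSucc * (g i.castSucc * h)⁻¹ := by group
  rw [this]
  exact hmem i.castSucc

/-- Well-definedness of the inverse map. -/
theorem Gkey (K : Subgroup G) (n : ℕ) (g g' : Fin n → G)
    (hyp : ∃ k : K, ∀ i, rc K (g i * (k : G)) = rc K (g' i)) :
    Gmk K n g = Gmk K n g' := by
  obtain ⟨k, hk⟩ := hyp
  apply Quotient.sound
  refine ⟨(k : G), fun i => ?_⟩
  induction i using Fin.lastCases with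
  | last =>
    simp only [Fin.snoc_last]
    show rcSMul K (rc K 1) (k : G) = rc K 1
    rw [rcSMul_mk, rc_eq_iff]
    simpa using K.inv_mem k.2
  | cast j =>
    simp only [Fin.snoc_castSucc]
    show rcSMul K (rc K (g j)) (k : G) = rc K (g' j)
    rw [rcSMul_mk]
    exact hk j

variable (K : Subgroup G) (n : ℕ)

/-- The forward map. -/
noncomputable def fwd : Quotient (orbRelG K (n + 1)) → Quotient (orbRelK K n) :=
  Quotient.lift (fun x : Fin (n + 1) → RCoset G K => Fmk K n (fun i => (x i).out))
    (by
      rintro x y ⟨h, hh⟩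
      refine Fkey K n _ _ ⟨h, fun i => ?_⟩
      rw [← rcSMul_mk, rc_out, rc_out, hh i])

/-- The inverse map. -/
noncomputable def bwd : Quotient (orbRelK K n) → Quotient (orbRelG K (n + 1)) :=
  Quotient.lift (fun x : Fin n → RCoset G K => Gmk K n (fun i => (x i).out))
    (by
      rintro x y ⟨k, hk⟩
      refine Gkey K n _ _ ⟨k, fun i => ?_⟩
      rw [← rcSMul_mk, rc_out, rc_out, hk i])

theorem fwd_mk (g : Fin (n + 1) → G) :
    fwd K n (Quotient.mk (orbRelG K (n + 1)) (fun i => rc K (g i))) = Fmk K n g := by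
  have h : fwd K n (Quotient.mk (orbRelG K (n + 1)) (fun i => rc K (g i))) =
      Fmk K n (fun i => (rc K (g i)).out) := rfl
  rw [h]
  refine Fkey K n _ _ ⟨1, fun i => ?_⟩
  rw [mul_one, rc_out]

theorem bwd_mk (g : Fin n → G) :
    bwd K n (Quotient.mk (orbRelK K n) (fun i => rc K (g i))) = Gmk K n g := by
  refine Gkey K n _ _ ⟨1, fun i => ?_⟩
  rw [Subgroup.coe_one, mul_one, rc_out]

theorem pi_exists_rep {m : ℕ} (x : Fin m → RCoset G K) :
    ∃ g : Fin m → G, x = fun i => rc K (g i) :=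
  ⟨fun i => (x i).out, funext fun i => (rc_out K (x i)).symm⟩

theorem bwd_fwd (y : Quotient (orbRelG K (n + 1))) : bwd K n (fwd K n y) = y := by
  induction y using Quotient.ind with
  | _ x =>
    obtain ⟨g, rfl⟩ := pi_exists_rep K x
    rw [fwd_mk]
    have h1 : Fmk K n g = Quotient.mk (orbRelK K n)
        (fun i : Fin n => rc K (g i.castSucc * (g (Fin.last n))⁻¹)) := rfl
    rw [h1, bwd_mk]
    apply Quotient.sound
    refine ⟨g (Fin.last n), fun i => ?_⟩
    induction i using Fin.lastCases with
    | last =>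
      simp only [Fin.snoc_last]
      show rcSMul K (rc K 1) (g (Fin.last n)) = rc K (g (Fin.last n))
      rw [rcSMul_mk, one_mul]
    | cast j =>
      simp only [Fin.snoc_castSucc]
      show rcSMul K (rc K (g j.castSucc * (g (Fin.last n))⁻¹)) (g (Fin.last n)) =
        rc K (g j.castSucc)
      rw [rcSMul_mk, inv_mul_cancel_right]

theorem Gmk_eq (g : Fin n → G) :
    Gmk K n g = Quotient.mk (orbRelG K (n + 1))
      (fun i => rc K (Fin.snoc (α := fun _ => G) g 1 i)) := by
  unfold Gmk
  congr 1
  funext i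
  induction i using Fin.lastCases with
  | last => simp
  | cast j => simp

theorem fwd_bwd (y : Quotient (orbRelK K n)) : fwd K n (bwd K n y) = y := by
  induction y using Quotient.ind with
  | _ x =>
    obtain ⟨g, rfl⟩ := pi_exists_rep K x
    rw [bwd_mk, Gmk_eq, fwd_mk]
    unfold Fmk
    congr 1
    funext i
    simp

end Aux

section Top

open Topology

variable {G : Type*} [Group G] [TopologicalSpace G] [IsTopologicalGroup G] (K : Subgroup G)

theorem continuous_rc : Continuous (rc K) := continuous_quot_mk

theorem surjective_rc : Function.Surjective (rc K) := Quotient.mk''_surjective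

theorem isOpenMap_rc : IsOpenMap (rc K) := by
  intro U hU
  have key : rc K ⁻¹' (rc K '' U) = ⋃ k : K, (fun x => (k : G) * x) '' U := by
    ext x
    simp only [Set.mem_preimage, Set.mem_image, Set.mem_iUnion]
    constructor
    · rintro ⟨u, hu, huv⟩
      have hxu : x * u⁻¹ ∈ K := (rc_eq_iff K).mp huv
      exact ⟨⟨x * u⁻¹, hxu⟩, u, hu, by group⟩
    · rintro ⟨k, u, hu, rfl⟩
      refine ⟨u, hu, ?_⟩
      rw [rc_eq_iff]
      simpa using k.2
  have : IsOpen (rc K ⁻¹' (rc K '' U)) := by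
    rw [key]
    exact isOpen_iUnion fun k => (Homeomorph.mulLeft (k : G)).isOpenMap U hU
  exact isOpen_coinduced.mpr this

theorem isOpenQuotientMap_rc : IsOpenQuotientMap (rc K) :=
  ⟨surjective_rc K, continuous_rc K, isOpenMap_rc K⟩

theorem isQuotientMap_PhiG (m : ℕ) :
    IsQuotientMap (fun g : Fin m → G =>
      Quotient.mk (orbRelG K m) (fun i => rc K (g i))) := by
  have h1 : IsQuotientMap (Pi.map fun _ : Fin m => rc K) :=
    (IsOpenQuotientMap.piMap fun _ => isOpenQuotientMap_rc K).isQuotientMap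
  have h2 : IsQuotientMap (Quotient.mk (orbRelG K m)) := isQuotientMap_quot_mk
  exact h2.comp h1

theorem isQuotientMap_PhiK (m : ℕ) :
    IsQuotientMap (fun g : Fin m → G =>
      Quotient.mk (orbRelK K m) (fun i => rc K (g i))) := by
  have h1 : IsQuotientMap (Pi.map fun _ : Fin m => rc K) :=
    (IsOpenQuotientMap.piMap fun _ => isOpenQuotientMap_rc K).isQuotientMap
  have h2 : IsQuotientMap (Quotient.mk (orbRelK K m)) := isQuotientMap_quot_mk
  exact h2.comp h1

theorem continuous_fwd (n : ℕ) : Continuous (fwd K n) := by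
  rw [(isQuotientMap_PhiG K (n + 1)).continuous_iff]
  have heq : (fwd K n ∘ fun g : Fin (n + 1) → G =>
      Quotient.mk (orbRelG K (n + 1)) (fun i => rc K (g i))) =
      (fun g : Fin n → G => Quotient.mk (orbRelK K n) (fun i => rc K (g i))) ∘
      (fun g : Fin (n + 1) → G => fun i : Fin n => g i.castSucc * (g (Fin.last n))⁻¹) := by
    funext g
    exact fwd_mk K n g
  rw [heq]
  refine (isQuotientMap_PhiK K n).continuous.comp ?_
  exact continuous_pi fun i =>
    (continuous_apply i.castSucc).mul (continuous_apply (Fin.last n)).inv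

theorem continuous_bwd (n : ℕ) : Continuous (bwd K n) := by
  rw [(isQuotientMap_PhiK K n).continuous_iff]
  have heq : (bwd K n ∘ fun g : Fin n → G =>
      Quotient.mk (orbRelK K n) (fun i => rc K (g i))) =
      (fun g : Fin (n + 1) → G => Quotient.mk (orbRelG K (n + 1)) (fun i => rc K (g i))) ∘
      (fun g : Fin n → G => Fin.snoc (α := fun _ => G) g 1) := by
    funext g
    rw [Function.comp_apply, bwd_mk, Gmk_eq]
    rfl
  rw [heq]
  refine (isQuotientMap_PhiG K (n + 1)).continuous.comp ?_
  refine continuous_pi fun i => ?_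
  induction i using Fin.lastCases with
  | last =>
    simp only [Fin.snoc_last]
    exact continuous_const
  | cast j =>
    simp only [Fin.snoc_castSucc]
    exact continuous_apply j

end Top

/-- for a topological group `G` and every `n ≥ 1` (here `n + 1`), the bijection
`((K\G)^{n+1})/G ≃ ((K\G)ⁿ)/K` induced by
`(Kg₁, …, Kg_{n+1}) ↦ (Kg₁g_{n+1}⁻¹, …, Kgₙg_{n+1}⁻¹)` is a homeomorphism, where `K\G`
carries the quotient topology, products the product topology, and orbit sets the quotient
topologies. -/
theorem coset_orbit_reduction_homeomorph (G : Type*) [Group G] [TopologicalSpace G]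
    [IsTopologicalGroup G] (K : Subgroup G) (n : ℕ) :
    ∃ ρ : Quotient (orbRelG K (n + 1)) ≃ₜ Quotient (orbRelK K n),
      (∀ g : Fin (n + 1) → G,
        ρ (Quotient.mk (orbRelG K (n + 1)) (fun i => rc K (g i))) =
          Quotient.mk (orbRelK K n)
            (fun i : Fin n => rc K (g i.castSucc * (g (Fin.last n))⁻¹))) ∧
      (∀ g : Fin n → G,
        ρ.symm (Quotient.mk (orbRelK K n) (fun i => rc K (g i))) =
          Quotient.mk (orbRelG K (n + 1))
            (Fin.snoc (fun i : Fin n => rc K (g i)) (rc K 1))) := by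
  refine ⟨⟨⟨fwd K n, bwd K n, bwd_fwd K n, fwd_bwd K n⟩, continuous_fwd K n, continuous_bwd K n⟩,
    fun g => fwd_mk K n g, fun g => bwd_mk K n g⟩
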